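/- arXiv:2010.14471 — 3 statements merged into one kernel-verified Lean document; each statement's English description precedes it below -/
import Mathlib

section
/- Let V ⊆ ℝⁿ be a compact convex set and F : V → ℝ a continuous quasi-convex function. Suppose there exist r > 0 and M ≥ 1 such that for all v₀, v₁ ∈ V with |v₁ - v₀| ≤ r and all t ∈ [0,1], F(v_t) - F(v₀) ≤ M t (F(v₁) - F(v₀))₊. Then there exists M' ≥ 1 (depending only on M, r, and diam(V)) such that for all v₀, v₁ ∈ V and all t ∈ [0,1], F(v_t) - F(v₀) ≤ M' t (F(v₁) - F(v₀))₊. -/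
/-- Local quantitative quasi-convexity at scales `≤ r` upgrades to global
quantitative quasi-convexity with a worse constant. -/
theorem stmt_2 {n : ℕ} (V : Set (EuclideanSpace ℝ (Fin n)))
    (hVc : IsCompact V) (hV : Convex ℝ V)
    (F : EuclideanSpace ℝ (Fin n) → ℝ) (hFcont : ContinuousOn F V)
    (hQC : ∀ v₀ ∈ V, ∀ v₁ ∈ V, ∀ t ∈ Set.Icc (0:ℝ) 1,
      F ((1 - t) • v₀ + t • v₁) ≤ max (F v₀) (F v₁))
    (r M : ℝ) (hr : 0 < r) (hM : 1 ≤ M)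
    (hloc : ∀ v₀ ∈ V, ∀ v₁ ∈ V, ‖v₁ - v₀‖ ≤ r → ∀ t ∈ Set.Icc (0:ℝ) 1,
      F ((1 - t) • v₀ + t • v₁) - F v₀ ≤ M * t * max (F v₁ - F v₀) 0) :
    ∃ M' : ℝ, 1 ≤ M' ∧ ∀ v₀ ∈ V, ∀ v₁ ∈ V, ∀ t ∈ Set.Icc (0:ℝ) 1,
      F ((1 - t) • v₀ + t • v₁) - F v₀ ≤ M' * t * max (F v₁ - F v₀) 0 := by
  set D := Metric.diam V with hDdef
  have hD0 : 0 ≤ D := Metric.diam_nonneg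
  have hDr : 0 ≤ D / r := div_nonneg hD0 hr.le
  set M' := M * (1 + D / r) with hM'def
  have hM'1 : 1 ≤ M' := by nlinarith
  have hM'0 : 0 ≤ M' := by linarith
  refine ⟨M', hM'1, ?_⟩
  intro v₀ hv₀ v₁ hv₁ t ⟨ht0, ht1⟩
  have hP0 : (0:ℝ) ≤ max (F v₁ - F v₀) 0 := le_max_right _ _
  have hdd : ‖v₁ - v₀‖ ≤ D := by
    rw [← dist_eq_norm]
    exact Metric.dist_le_diam_of_mem hVc.isBounded hv₁ hv₀
  by_cases hsmall : ‖v₁ - v₀‖ ≤ r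
  · refine (hloc v₀ hv₀ v₁ hv₁ hsmall t ⟨ht0, ht1⟩).trans ?_
    have hMt : M * t ≤ M' * t := by
      nlinarith [mul_nonneg (mul_nonneg (zero_le_one.trans hM) hDr) ht0]
    exact mul_le_mul_of_nonneg_right hMt hP0
  · push_neg at hsmall
    set d := ‖v₁ - v₀‖ with hd
    have hd0 : 0 < d := hr.trans hsmall
    set s := r / d with hs
    have hs0 : 0 < s := div_pos hr hd0
    have hs1 : s < 1 := (div_lt_one hd0).mpr hsmall
    -- key: M ≤ M' * s
    have hMs : M ≤ M' * s := by
      have h1 : M' * s = M * ((r + D) / d) := by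
        rw [hM'def, hs]; field_simp; try ring
      rw [h1]
      have h2 : (1:ℝ) ≤ (r + D) / d := by
        rw [le_div_iff₀ hd0]; linarith
      nlinarith
    rcases le_or_gt t s with hts | hts
    · -- small t : use local estimate up to w
      set τ := t / s with hτ
      have hτ0 : 0 ≤ τ := div_nonneg ht0 hs0.le
      have hτ1 : τ ≤ 1 := (div_le_one hs0).mpr hts
      have hτs : τ * s = t := div_mul_cancel₀ t hs0.ne'
      set w := (1 - s) • v₀ + s • v₁ with hw
      have hwV : w ∈ V := hV hv₀ hv₁ (by linarith) hs0.le (by ring)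
      have hwn : ‖w - v₀‖ ≤ r := by
        have hww : w - v₀ = s • (v₁ - v₀) := by rw [hw]; module
        rw [hww, norm_smul, Real.norm_eq_abs, abs_of_pos hs0, ← hd, hs,
          div_mul_cancel₀ r hd0.ne']
      have hid : (1 - τ) • v₀ + τ • w = (1 - t) • v₀ + t • v₁ := by
        rw [hw, ← hτs]; module
      have h1 := hloc v₀ hv₀ w hwV hwn τ ⟨hτ0, hτ1⟩
      rw [hid] at h1
      have hQ := hQC v₀ hv₀ v₁ hv₁ s ⟨hs0.le, hs1.le⟩
      rw [← hw] at hQ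
      have h2 : max (F w - F v₀) 0 ≤ max (F v₁ - F v₀) 0 := by
        refine max_le ?_ hP0
        rcases max_cases (F v₀) (F v₁) with ⟨he, _⟩ | ⟨he, _⟩ <;>
          rw [he] at hQ
        · linarith [hP0]
        · linarith [le_max_left (F v₁ - F v₀) (0:ℝ)]
      have hMt : M * τ ≤ M' * t := by
        have := mul_le_mul_of_nonneg_left hMs hτ0
        nlinarith
      refine h1.trans ?_
      calc M * τ * max (F w - F v₀) 0
          ≤ M * τ * max (F v₁ - F v₀) 0 := by
            exact mul_le_mul_of_nonneg_left h2 (by positivity)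
        _ ≤ M' * t * max (F v₁ - F v₀) 0 :=
            mul_le_mul_of_nonneg_right hMt hP0
    · -- large t : plain quasi-convexity suffices
      have hQ := hQC v₀ hv₀ v₁ hv₁ t ⟨ht0, ht1⟩
      have h3 : F ((1 - t) • v₀ + t • v₁) - F v₀ ≤ max (F v₁ - F v₀) 0 := by
        rcases max_cases (F v₀) (F v₁) with ⟨he, _⟩ | ⟨he, _⟩ <;> rw [he] at hQ
        · linarith [hP0]
        · linarith [le_max_left (F v₁ - F v₀) (0:ℝ)]
      have hMt1 : 1 ≤ M' * t := by nlinarith [mul_le_mul_of_nonneg_left hts.le hM'0]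
      nlinarith
end

section
/- Let F : B_r(v₀) → ℝ be C¹ with |∇F(v) - ∇F(v₀)| ≤ (1/(2k))|∇F(v₀)| for all v ∈ B_r(v₀), where k ≥ 1. If v₁ ∈ B_r(v₀) satisfies ⟨v₁ - v₀, ∇F(v₀)⟩ ≥ (1/k)|v₁ - v₀||∇F(v₀)|, then for all t ∈ [0,1], F(v_t) - F(v₀) ≤ 5 t (F(v₁) - F(v₀)) where v_t = (1-t)v₀ + t v₁. -/
open scoped RealInnerProductSpace

/-- Quantitative quasi-convexity with constant `5` along directions in the cone of
aperture `1/k` around `∇F(v₀)`. -/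
theorem stmt_10 {n : ℕ} (v₀ v₁ : EuclideanSpace ℝ (Fin n)) (r k : ℝ)
    (hk : 1 ≤ k) (hr : 0 < r)
    (F : EuclideanSpace ℝ (Fin n) → ℝ)
    (hF : ContDiffOn ℝ 1 F (Metric.ball v₀ r))
    (hosc : ∀ v ∈ Metric.ball v₀ r,
      ‖gradient F v - gradient F v₀‖ ≤ (1 / (2 * k)) * ‖gradient F v₀‖)
    (hv₁ : v₁ ∈ Metric.ball v₀ r)
    (hcone : (1 / k) * ‖v₁ - v₀‖ * ‖gradient F v₀‖ ≤ ⟪v₁ - v₀, gradient F v₀⟫) :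
    ∀ t ∈ Set.Icc (0:ℝ) 1,
      F ((1 - t) • v₀ + t • v₁) - F v₀ ≤ 5 * t * (F v₁ - F v₀) := by
  have hk0 : (0:ℝ) < k := lt_of_lt_of_le one_pos hk
  set d := v₁ - v₀ with hd
  set g := gradient F v₀ with hg
  set ip := ⟪d, g⟫ with hip
  set C := (1 / (2 * k)) * (‖d‖ * ‖g‖) with hC
  have hv₀ : v₀ ∈ Metric.ball v₀ r := Metric.mem_ball_self hr
  -- membership of segment points
  have hmem : ∀ t ∈ Set.Icc (0:ℝ) 1, v₀ + t • d ∈ Metric.ball v₀ r := by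
    intro t ht
    have h := (convex_ball v₀ r) hv₀ hv₁ (by linarith [ht.2] : (0:ℝ) ≤ 1 - t) ht.1
      (by ring)
    have : v₀ + t • d = (1 - t) • v₀ + t • v₁ := by
      simp [hd, smul_sub, sub_smul]; abel
    rw [this]; exact h
  have hdiff : ∀ t ∈ Set.Icc (0:ℝ) 1, DifferentiableAt ℝ F (v₀ + t • d) := by
    intro t ht
    exact (hF.differentiableOn one_ne_zero).differentiableAt
      (Metric.isOpen_ball.mem_nhds (hmem t ht))
  -- the auxiliary function and its derivative
  set ψ : ℝ → ℝ := fun t => F (v₀ + t • d) - t * ip with hψ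
  have hderiv : ∀ t ∈ Set.Icc (0:ℝ) 1,
      HasDerivAt ψ (⟪gradient F (v₀ + t • d), d⟫ - ip) t := by
    intro t ht
    have h1 : HasDerivAt (fun t : ℝ => v₀ + t • d) d t := by
      simpa using ((hasDerivAt_id t).smul_const d).const_add v₀
    have h2 := (hdiff t ht).hasGradientAt
    have h2' := h2.hasFDerivAt
    have h3 : HasDerivAt (fun t : ℝ => F (v₀ + t • d))
        (⟪gradient F (v₀ + t • d), d⟫) t := by
      have := h2'.comp_hasDerivAt t h1
      exact this.congr_deriv InnerProductSpace.toDual_apply_apply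
    exact h3.sub (by simpa using (hasDerivAt_id t).mul_const ip)
  have hbound : ∀ t ∈ Set.Icc (0:ℝ) 1,
      ‖⟪gradient F (v₀ + t • d), d⟫ - ip‖ ≤ C := by
    intro t ht
    have : ⟪gradient F (v₀ + t • d), d⟫ - ip = ⟪gradient F (v₀ + t • d) - g, d⟫ := by
      rw [inner_sub_left, hip, real_inner_comm d g]
    rw [this]
    calc ‖⟪gradient F (v₀ + t • d) - g, d⟫‖
        ≤ ‖gradient F (v₀ + t • d) - g‖ * ‖d‖ := norm_inner_le_norm _ _
      _ ≤ ((1 / (2 * k)) * ‖g‖) * ‖d‖ :=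
          mul_le_mul_of_nonneg_right (hosc _ (hmem t ht)) (norm_nonneg _)
      _ = C := by rw [hC]; ring
  have hseg := norm_image_sub_le_of_norm_deriv_le_segment'
    (fun t ht => (hderiv t ht).hasDerivWithinAt)
    (fun t ht => hbound t (Set.Ico_subset_Icc_self ht))
  -- bounds
  intro t ht
  have h1 := hseg t ht
  have h2 := hseg 1 (Set.mem_Icc.2 ⟨zero_le_one, le_rfl⟩)
  simp only [hψ, zero_smul, add_zero, zero_mul, sub_zero] at h1 h2
  rw [Real.norm_eq_abs, abs_le] at h1 h2
  have hv1eq : v₀ + (1:ℝ) • d = v₁ := by simp [hd]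
  rw [hv1eq] at h2
  have hvt : (1 - t) • v₀ + t • v₁ = v₀ + t • d := by
    simp [hd, smul_sub, sub_smul]; abel
  rw [hvt]
  have hL : (0:ℝ) ≤ ‖d‖ * ‖g‖ := mul_nonneg (norm_nonneg _) (norm_nonneg _)
  have hcone' : (1 / k) * (‖d‖ * ‖g‖) ≤ ip := by
    rw [hip]; calc (1/k) * (‖d‖ * ‖g‖) = (1/k) * ‖d‖ * ‖g‖ := by ring
      _ ≤ _ := hcone
  have h1' : F (v₀ + t • d) - t * ip - F v₀ ≤ C * t := h1.2
  have h2' : -(C * 1) ≤ F v₁ - 1 * ip - F v₀ := h2.1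
  have hC2 : 2 * k * C = ‖d‖ * ‖g‖ := by rw [hC]; field_simp
  have hcone2 : ‖d‖ * ‖g‖ ≤ k * ip := by
    have := mul_le_mul_of_nonneg_left hcone' hk0.le
    calc ‖d‖ * ‖g‖ = k * (1 / k * (‖d‖ * ‖g‖)) := by field_simp
      _ ≤ k * ip := this
  have hkey : 0 ≤ 4 * ip - 6 * C := by nlinarith [mul_pos hk0 hk0]
  have h2key : ip - C ≤ F v₁ - F v₀ := by linarith
  have ht0 := ht.1
  have step1 : F (v₀ + t • d) - F v₀ ≤ 5 * t * (ip - C) := by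
    nlinarith [mul_nonneg ht0 hkey]
  calc F (v₀ + t • d) - F v₀ ≤ 5 * t * (ip - C) := step1
    _ ≤ 5 * t * (F v₁ - F v₀) :=
        mul_le_mul_of_nonneg_left h2key (by positivity)
end

section
/- Let F : V → ℝ be a C¹ quasi-convex function on an open convex set V ⊆ ℝⁿ with ∇F(v) ≠ 0 for all v. Let v₀ ∈ V, and let v₁ ∈ V satisfy ⟨v₁ - v₀, ∇F(v₀)⟩ < 0. Suppose there is t' ∈ (0,1) with F(v_{t'}) = F(v₀) and F(v_s) ≤ F(v₀) for s ∈ [0, t'], and suppose for some M ≥ 1 the inequality F(v_s) - F(v_{t'}) ≤ M ((s - t')/(1 - t'))(F(v₁) - F(v_{t'}))₊ holds for all s ∈ [t', 1]. Then for all s ∈ [0,1], F(v_s) - F(v₀) ≤ M s (F(v₁) - F(v₀))₊. -/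
open scoped RealInnerProductSpace

/-- Reduction of quantitative quasi-convexity along a segment leaving the sublevel
set of `v₀` to the sub-segment where `F` exceeds `F v₀`. -/
theorem stmt_14 {n : ℕ} (V : Set (EuclideanSpace ℝ (Fin n)))
    (hVo : IsOpen V) (hV : Convex ℝ V)
    (F : EuclideanSpace ℝ (Fin n) → ℝ) (hF : ContDiffOn ℝ 1 F V)
    (hQC : ∀ a ∈ V, ∀ b ∈ V, ∀ t ∈ Set.Icc (0:ℝ) 1,
      F ((1 - t) • a + t • b) ≤ max (F a) (F b))
    (hgrad : ∀ v ∈ V, gradient F v ≠ 0)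
    (v₀ v₁ : EuclideanSpace ℝ (Fin n)) (hv₀ : v₀ ∈ V) (hv₁ : v₁ ∈ V)
    (hdir : ⟪v₁ - v₀, gradient F v₀⟫ < 0)
    (t' : ℝ) (ht' : t' ∈ Set.Ioo (0:ℝ) 1)
    (hlevel : F ((1 - t') • v₀ + t' • v₁) = F v₀)
    (hbelow : ∀ s ∈ Set.Icc (0:ℝ) t', F ((1 - s) • v₀ + s • v₁) ≤ F v₀)
    (M : ℝ) (hM : 1 ≤ M)
    (hQQ : ∀ s ∈ Set.Icc t' 1,
      F ((1 - s) • v₀ + s • v₁) - F ((1 - t') • v₀ + t' • v₁) ≤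
        M * ((s - t') / (1 - t')) *
          max (F v₁ - F ((1 - t') • v₀ + t' • v₁)) 0) :
    ∀ s ∈ Set.Icc (0:ℝ) 1,
      F ((1 - s) • v₀ + s • v₁) - F v₀ ≤ M * s * max (F v₁ - F v₀) 0 := by
  intro s hs
  obtain ⟨ht'0, ht'1⟩ := ht'
  obtain ⟨hs0, hs1⟩ := hs
  have hmax : (0:ℝ) ≤ max (F v₁ - F v₀) 0 := le_max_right _ _
  have hM0 : (0:ℝ) ≤ M := le_trans zero_le_one hM
  by_cases hst : s ≤ t'
  · have h1 := hbelow s ⟨hs0, hst⟩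
    have : 0 ≤ M * s * max (F v₁ - F v₀) 0 := by positivity
    linarith
  · push_neg at hst
    have h2 := hQQ s ⟨le_of_lt hst, hs1⟩
    rw [hlevel] at h2
    have hratio : (s - t') / (1 - t') ≤ s := by
      rw [div_le_iff₀ (by linarith)]
      nlinarith
    have hratio0 : 0 ≤ (s - t') / (1 - t') := div_nonneg (by linarith) (by linarith)
    calc F ((1 - s) • v₀ + s • v₁) - F v₀ ≤ M * ((s - t') / (1 - t')) * max (F v₁ - F v₀) 0 := h2
      _ ≤ M * s * max (F v₁ - F v₀) 0 := by
          apply mul_le_mul_of_nonneg_right _ hmax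
          exact mul_le_mul_of_nonneg_left hratio hM0
end
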